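/- If moreover |f̂(x) − f(x)| > f₀/2 whenever f̂(x) ≤ f₀/2, and a⁴ ≤ a₁⁴, then taking expectations, E‖â² − a²‖ₙ² ≤ (12/f₀²)(E‖ĝ − g‖ₙ² + E‖σ̂² − σ²‖ₙ² + 2a₁⁴ E‖f − f̂‖ₙ²). -/

import Mathlib

open MeasureTheory
open scoped BigOperators

lemma key_pointwise (f0 a1 fv gv sv a fhv ghv shv : ℝ) (hf0 : 0 < f0)
    (hfv : f0 < fv) (hgv : gv = sv + a * fv) (hann : 0 ≤ a) (habd : a ≤ a1 ^ 2)
    (hsep : fhv ≤ f0 / 2 → f0 / 2 < |fhv - fv|) :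
    ((if f0 / 2 < fhv then (ghv - shv) / fhv else 0) - a) ^ 2
      ≤ 12 / f0 ^ 2 * ((ghv - gv) ^ 2 + (shv - sv) ^ 2 + 2 * a1 ^ 4 * (fv - fhv) ^ 2) := by
  have ha4 : a ^ 2 ≤ a1 ^ 4 := by nlinarith
  have h4 : (0:ℝ) < f0 ^ 2 := by positivity
  have ha14 : (0:ℝ) ≤ a1 ^ 4 := by positivity
  set A := (ghv - gv) ^ 2 with hA
  set B := (shv - sv) ^ 2 with hB
  set C := (fv - fhv) ^ 2 with hC
  have hAnn : 0 ≤ A := sq_nonneg _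
  have hBnn : 0 ≤ B := sq_nonneg _
  have hCnn : 0 ≤ C := sq_nonneg _
  have hSnn : (0:ℝ) ≤ A + B + 2 * a1 ^ 4 * C := by positivity
  by_cases h : f0 / 2 < fhv
  · simp only [if_pos h]
    have hfh : 0 < fhv := by linarith
    have hkey : ((ghv - shv) / fhv - a) = (ghv - shv - a * fhv) / fhv := by
      field_simp
    rw [hkey, div_pow, div_le_iff₀ (by positivity)]
    have h1 : ghv - shv - a * fhv = (ghv - gv) - (shv - sv) + a * (fv - fhv) := by
      rw [hgv]; ring
    have h2 : f0 ^ 2 / 4 ≤ fhv ^ 2 := by nlinarith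
    rw [h1]
    have h3 : ((ghv - gv) - (shv - sv) + a * (fv - fhv)) ^ 2
        ≤ 3 * (A + B + a1 ^ 4 * C) := by
      rw [hA, hB, hC]
      nlinarith [sq_nonneg ((ghv - gv) + (shv - sv)), sq_nonneg ((ghv - gv) - a * (fv - fhv)),
        sq_nonneg ((shv - sv) + a * (fv - fhv)), sq_nonneg (fv - fhv)]
    rw [div_mul_eq_mul_div, div_mul_eq_mul_div, le_div_iff₀ h4]
    have c1 := mul_le_mul_of_nonneg_right h3 h4.le
    have c3 := mul_le_mul_of_nonneg_left h2 (by linarith : (0:ℝ) ≤ 12 * (A + B + 2 * a1 ^ 4 * C))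
    linarith [mul_nonneg (mul_nonneg ha14 hCnn) h4.le]
  · simp only [if_neg h]
    have hs := hsep (le_of_not_gt h)
    have h5 : f0 ^ 2 / 4 ≤ C := by
      have h6 : (fhv - fv) ^ 2 = |fhv - fv| ^ 2 := (sq_abs _).symm
      rw [hC]; nlinarith
    rw [div_mul_eq_mul_div, le_div_iff₀ h4]
    have c1 := mul_le_mul_of_nonneg_right ha4 h4.le
    have c2 := mul_le_mul_of_nonneg_left h5 ha14
    have hc : (0 - a)^2 = a^2 := by ring
    rw [hc]
    linarith [mul_nonneg hAnn h4.le, mul_nonneg hBnn h4.le, sq_nonneg (a*f0)]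

theorem expected_empirical_risk_bound_jump_coefficient
    {Ω : Type*} [MeasurableSpace Ω] (μ : Measure Ω) [IsProbabilityMeasure μ]
    (n : ℕ) (hn : 0 < n) (X : Fin n → Ω → ℝ) (hX : ∀ i, Measurable (X i))
    (f g σ2 a2 gh σh fh : ℝ → ℝ)
    (hmf : Measurable f) (hmg : Measurable g) (hmσ2 : Measurable σ2)
    (hma2 : Measurable a2) (hmgh : Measurable gh) (hmσh : Measurable σh)
    (hmfh : Measurable fh)
    (f0 a1 : ℝ) (hf0 : 0 < f0)
    (hf : ∀ y, f0 < f y)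
    (hg : ∀ y, g y = σ2 y + a2 y * f y)
    (ha2nn : ∀ y, 0 ≤ a2 y) (ha2bd : ∀ y, a2 y ≤ a1 ^ 2)
    (hsep : ∀ y, fh y ≤ f0 / 2 → f0 / 2 < |fh y - f y|) :
    (∫⁻ ω, ENNReal.ofReal ((1 / (n : ℝ)) * ∑ i,
        ((if f0 / 2 < fh (X i ω) then (gh (X i ω) - σh (X i ω)) / fh (X i ω) else 0)
          - a2 (X i ω)) ^ 2) ∂μ)
      ≤ ENNReal.ofReal (12 / f0 ^ 2) *
          ((∫⁻ ω, ENNReal.ofReal ((1 / (n : ℝ)) * ∑ i, (gh (X i ω) - g (X i ω)) ^ 2) ∂μ)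
            + (∫⁻ ω, ENNReal.ofReal ((1 / (n : ℝ)) * ∑ i, (σh (X i ω) - σ2 (X i ω)) ^ 2) ∂μ)
            + ENNReal.ofReal (2 * a1 ^ 4) *
                (∫⁻ ω, ENNReal.ofReal ((1 / (n : ℝ)) * ∑ i, (f (X i ω) - fh (X i ω)) ^ 2) ∂μ)) := by
  set c : ℝ := 12 / f0 ^ 2 with hcdef
  have hcnn : 0 ≤ c := by positivity
  have hdnn : (0:ℝ) ≤ 2 * a1 ^ 4 := by positivity
  have hninv : (0:ℝ) ≤ 1 / (n:ℝ) := by positivity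
  -- measurable real integrands
  have hmA : Measurable (fun ω => ENNReal.ofReal ((1 / (n : ℝ)) * ∑ i, (gh (X i ω) - g (X i ω)) ^ 2)) := by
    apply Measurable.ennreal_ofReal
    exact measurable_const.mul (Finset.measurable_sum _ fun i _ =>
      ((hmgh.comp (hX i)).sub (hmg.comp (hX i))).pow_const 2)
  have hmB : Measurable (fun ω => ENNReal.ofReal ((1 / (n : ℝ)) * ∑ i, (σh (X i ω) - σ2 (X i ω)) ^ 2)) := by
    apply Measurable.ennreal_ofReal
    exact measurable_const.mul (Finset.measurable_sum _ fun i _ =>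
      ((hmσh.comp (hX i)).sub (hmσ2.comp (hX i))).pow_const 2)
  have hmC : Measurable (fun ω => ENNReal.ofReal ((1 / (n : ℝ)) * ∑ i, (f (X i ω) - fh (X i ω)) ^ 2)) := by
    apply Measurable.ennreal_ofReal
    exact measurable_const.mul (Finset.measurable_sum _ fun i _ =>
      ((hmf.comp (hX i)).sub (hmfh.comp (hX i))).pow_const 2)
  -- pointwise bound
  have hpt : ∀ ω, ENNReal.ofReal ((1 / (n : ℝ)) * ∑ i,
        ((if f0 / 2 < fh (X i ω) then (gh (X i ω) - σh (X i ω)) / fh (X i ω) else 0)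
          - a2 (X i ω)) ^ 2)
      ≤ ENNReal.ofReal c *
          (ENNReal.ofReal ((1 / (n : ℝ)) * ∑ i, (gh (X i ω) - g (X i ω)) ^ 2)
            + ENNReal.ofReal ((1 / (n : ℝ)) * ∑ i, (σh (X i ω) - σ2 (X i ω)) ^ 2)
            + ENNReal.ofReal (2 * a1 ^ 4) *
                ENNReal.ofReal ((1 / (n : ℝ)) * ∑ i, (f (X i ω) - fh (X i ω)) ^ 2)) := by
    intro ω
    have hAnn : 0 ≤ (1 / (n : ℝ)) * ∑ i, (gh (X i ω) - g (X i ω)) ^ 2 := by positivity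
    have hBnn : 0 ≤ (1 / (n : ℝ)) * ∑ i, (σh (X i ω) - σ2 (X i ω)) ^ 2 := by positivity
    have hCnn : 0 ≤ (1 / (n : ℝ)) * ∑ i, (f (X i ω) - fh (X i ω)) ^ 2 := by positivity
    rw [← ENNReal.ofReal_mul hdnn, ← ENNReal.ofReal_add hAnn hBnn,
      ← ENNReal.ofReal_add (by positivity) (by positivity), ← ENNReal.ofReal_mul hcnn]
    apply ENNReal.ofReal_le_ofReal
    have hsum : (∑ i, ((if f0 / 2 < fh (X i ω) then (gh (X i ω) - σh (X i ω)) / fh (X i ω) else 0)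
          - a2 (X i ω)) ^ 2)
        ≤ ∑ i, c * ((gh (X i ω) - g (X i ω)) ^ 2 + (σh (X i ω) - σ2 (X i ω)) ^ 2
            + 2 * a1 ^ 4 * (f (X i ω) - fh (X i ω)) ^ 2) := by
      apply Finset.sum_le_sum
      intro i _
      exact key_pointwise f0 a1 (f (X i ω)) (g (X i ω)) (σ2 (X i ω)) (a2 (X i ω))
        (fh (X i ω)) (gh (X i ω)) (σh (X i ω)) hf0 (hf _) (hg _) (ha2nn _) (ha2bd _) (hsep _)
    calc (1 / (n : ℝ)) * ∑ i, ((if f0 / 2 < fh (X i ω) then (gh (X i ω) - σh (X i ω)) / fh (X i ω) else 0)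
          - a2 (X i ω)) ^ 2
        ≤ (1 / (n : ℝ)) * ∑ i, c * ((gh (X i ω) - g (X i ω)) ^ 2 + (σh (X i ω) - σ2 (X i ω)) ^ 2
            + 2 * a1 ^ 4 * (f (X i ω) - fh (X i ω)) ^ 2) :=
          mul_le_mul_of_nonneg_left hsum hninv
      _ = c * ((1 / (n : ℝ)) * ∑ i, (gh (X i ω) - g (X i ω)) ^ 2
            + (1 / (n : ℝ)) * ∑ i, (σh (X i ω) - σ2 (X i ω)) ^ 2
            + 2 * a1 ^ 4 * ((1 / (n : ℝ)) * ∑ i, (f (X i ω) - fh (X i ω)) ^ 2)) := by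
          simp only [mul_add, Finset.sum_add_distrib, ← Finset.mul_sum]
          ring
  calc (∫⁻ ω, ENNReal.ofReal ((1 / (n : ℝ)) * ∑ i,
        ((if f0 / 2 < fh (X i ω) then (gh (X i ω) - σh (X i ω)) / fh (X i ω) else 0)
          - a2 (X i ω)) ^ 2) ∂μ)
      ≤ ∫⁻ ω, ENNReal.ofReal c *
          (ENNReal.ofReal ((1 / (n : ℝ)) * ∑ i, (gh (X i ω) - g (X i ω)) ^ 2)
            + ENNReal.ofReal ((1 / (n : ℝ)) * ∑ i, (σh (X i ω) - σ2 (X i ω)) ^ 2)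
            + ENNReal.ofReal (2 * a1 ^ 4) *
                ENNReal.ofReal ((1 / (n : ℝ)) * ∑ i, (f (X i ω) - fh (X i ω)) ^ 2)) ∂μ :=
        lintegral_mono hpt
    _ = ENNReal.ofReal c *
          ((∫⁻ ω, ENNReal.ofReal ((1 / (n : ℝ)) * ∑ i, (gh (X i ω) - g (X i ω)) ^ 2) ∂μ)
            + (∫⁻ ω, ENNReal.ofReal ((1 / (n : ℝ)) * ∑ i, (σh (X i ω) - σ2 (X i ω)) ^ 2) ∂μ)
            + ENNReal.ofReal (2 * a1 ^ 4) *
                (∫⁻ ω, ENNReal.ofReal ((1 / (n : ℝ)) * ∑ i, (f (X i ω) - fh (X i ω)) ^ 2) ∂μ)) := by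
        rw [lintegral_const_mul' _ _ ENNReal.ofReal_ne_top,
          lintegral_add_right _ (hmC.const_mul _), lintegral_add_right _ hmB,
          lintegral_const_mul _ hmC]
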